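/- Let V be a finite set with sizes s : V → ℝ>0, capacity K > 0, and suppose all s_v = 1 and K is a positive integer. Let F be a monotone submodular set function on V with F(∅) = 0. The greedy algorithm, which starting from S_0 = ∅ repeatedly adds the element maximizing the marginal gain until |S| = K, produces a set S_K with F(S_K) ≥ (1 − 1/e)·max{F(S) : |S| ≤ K}. -/

import Mathlib

lemma submod_sum_bound {V : Type*} [Fintype V] [DecidableEq V]
    (F : Finset V → ℝ)
    (hsub : ∀ S T : Finset V, ∀ w : V, S ⊆ T → w ∉ T →
      F (insert w T) - F T ≤ F (insert w S) - F S) :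
    ∀ B S : Finset V, Disjoint B S →
      F (B ∪ S) - F S ≤ ∑ w ∈ B, (F (insert w S) - F S) := by
  intro B
  induction B using Finset.induction_on with
  | empty => intro S _; simp
  | insert a B' ha ih =>
    intro S hd
    have hd' : Disjoint B' S := by
      exact Finset.disjoint_of_subset_left (Finset.subset_insert a B') hd
    have haS : a ∉ S := by
      have := Finset.disjoint_left.mp hd (Finset.mem_insert_self a B')
      exact this
    have haBS : a ∉ B' ∪ S := by simp [ha, haS]
    have h1 : F (insert a (B' ∪ S)) - F (B' ∪ S) ≤ F (insert a S) - F S :=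
      hsub S (B' ∪ S) a Finset.subset_union_right haBS
    have h2 := ih S hd'
    have : insert a B' ∪ S = insert a (B' ∪ S) := by
      ext x; simp [Finset.mem_insert, Finset.mem_union, or_assoc]
    rw [this, Finset.sum_insert ha]
    linarith

/-- the greedy algorithm achieves a (1 − 1/e) approximation for monotone
submodular maximization under a cardinality constraint (unit sizes, integer capacity K). -/
theorem greedy_one_minus_inv_e {V : Type*} [Fintype V] [DecidableEq V]
    (F : Finset V → ℝ)
    (hmono : ∀ S T : Finset V, S ⊆ T → F S ≤ F T)
    (hsub : ∀ S T : Finset V, ∀ w : V, S ⊆ T → w ∉ T →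
      F (insert w T) - F T ≤ F (insert w S) - F S)
    (hzero : F ∅ = 0)
    (K : ℕ) (hK : 0 < K) (hKcard : K ≤ Fintype.card V)
    (S : ℕ → Finset V) (hS0 : S 0 = ∅)
    (hgreedy : ∀ i < K, ∃ w ∉ S i, S (i + 1) = insert w (S i) ∧
      ∀ w' ∉ S i, F (insert w' (S i)) - F (S i) ≤ F (insert w (S i)) - F (S i)) :
    ∀ T : Finset V, T.card ≤ K → (1 - 1 / Real.exp 1) * F T ≤ F (S K) := by
  intro T hT
  have hKR : (0:ℝ) < (K:ℝ) := by exact_mod_cast hK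
  have hFT : 0 ≤ F T := by
    have := hmono ∅ T (Finset.empty_subset T); linarith [hzero ▸ this]
  -- one greedy step
  have step : ∀ i < K, F T - F (S (i+1)) ≤ (1 - 1/(K:ℝ)) * (F T - F (S i)) := by
    intro i hi
    obtain ⟨w, hw, hins, hmax⟩ := hgreedy i hi
    set g := F (insert w (S i)) - F (S i) with hg
    have hg0 : 0 ≤ g := by
      have := hmono (S i) (insert w (S i)) (Finset.subset_insert w (S i))
      linarith
    -- F T - F (S i) ≤ K * g
    have hbound : F T - F (S i) ≤ (K:ℝ) * g := by
      have h1 : F T ≤ F (T ∪ S i) := hmono T (T ∪ S i) Finset.subset_union_left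
      have hdisj : Disjoint (T \ S i) (S i) := Finset.sdiff_disjoint
      have heq : (T \ S i) ∪ S i = T ∪ S i := Finset.sdiff_union_self_eq_union
      have h2 := submod_sum_bound F hsub (T \ S i) (S i) hdisj
      rw [heq] at h2
      have h3 : ∑ w' ∈ T \ S i, (F (insert w' (S i)) - F (S i)) ≤ (T \ S i).card • g := by
        apply Finset.sum_le_card_nsmul
        intro w' hw'
        exact hmax w' (Finset.mem_sdiff.mp hw').2
      have hcard : ((T \ S i).card : ℝ) ≤ (K:ℝ) := by
        have : (T \ S i).card ≤ T.card := Finset.card_le_card (Finset.sdiff_subset)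
        exact_mod_cast le_trans this hT
      have h4 : ((T \ S i).card : ℝ) * g ≤ (K:ℝ) * g :=
        mul_le_mul_of_nonneg_right hcard hg0
      rw [nsmul_eq_mul] at h3
      linarith
    have hnext : F (S (i+1)) = F (S i) + g := by rw [hins]; ring
    rw [hnext]
    have hgoal : (F T - F (S i)) / (K:ℝ) ≤ g := by
      rw [div_le_iff₀ hKR]; linarith
    have hexp : (1 - 1/(K:ℝ)) * (F T - F (S i))
        = (F T - F (S i)) - (F T - F (S i)) / (K:ℝ) := by
      field_simp
    linarith
  -- iterate
  have iter : ∀ i ≤ K, F T - F (S i) ≤ (1 - 1/(K:ℝ))^i * F T := by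
    intro i
    induction i with
    | zero => intro _; simp [hS0, hzero]
    | succ n ih =>
      intro hn
      have hn' : n < K := hn
      have h1 := step n hn'
      have h2 := ih (le_of_lt hn')
      have hc : (0:ℝ) ≤ 1 - 1/(K:ℝ) := by
        have : 1/(K:ℝ) ≤ 1 := by rw [div_le_one hKR]; exact_mod_cast hK
        linarith
      calc F T - F (S (n+1)) ≤ (1 - 1/(K:ℝ)) * (F T - F (S n)) := h1
        _ ≤ (1 - 1/(K:ℝ)) * ((1 - 1/(K:ℝ))^n * F T) := by
            exact mul_le_mul_of_nonneg_left h2 hc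
        _ = (1 - 1/(K:ℝ))^(n+1) * F T := by ring
  have hfin := iter K le_rfl
  -- (1 - 1/K)^K ≤ exp(-1)
  have hc : (0:ℝ) ≤ 1 - 1/(K:ℝ) := by
    have : 1/(K:ℝ) ≤ 1 := by rw [div_le_one hKR]; exact_mod_cast hK
    linarith
  have h1 : (1 - 1/(K:ℝ)) ≤ Real.exp (-(1/K)) := by
    have := Real.add_one_le_exp (-(1/(K:ℝ)))
    linarith
  have h2 : (1 - 1/(K:ℝ))^K ≤ (Real.exp (-(1/K)))^K :=
    pow_le_pow_left₀ hc h1 K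
  have h3 : (Real.exp (-(1/(K:ℝ))))^K = Real.exp (-1) := by
    rw [← Real.exp_nat_mul]
    congr 1
    field_simp
  have h4 : (1 - 1/(K:ℝ))^K ≤ 1 / Real.exp 1 := by
    rw [h3, Real.exp_neg] at h2
    rw [inv_eq_one_div] at h2
    exact h2
  have h5 : (1 - 1/(K:ℝ))^K * F T ≤ (1 / Real.exp 1) * F T :=
    mul_le_mul_of_nonneg_right h4 hFT
  linarith
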